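/- Let a_n, a_m, b_n, b_m : ℝ → ℝ be differentiable, and define R(θ,r) = (a_n(θ)r + a_m(θ)r²)/(b_n(θ) + b_m(θ)r) and 𝓕(θ,r) = −ln|b_m(θ)| + ln|b_n(θ) + b_m(θ)r| − 2 ln|r| − ln(2π). Then at every point (θ,r) with r ≠ 0, b_m(θ) ≠ 0 and b_n(θ) + b_m(θ)r ≠ 0, one has ∂R/∂r(θ,r) + ∂𝓕/∂θ(θ,r) + ∂𝓕/∂r(θ,r)·R(θ,r) = −b_m(θ)·Φ(θ)/(b_n(θ) + b_m(θ)r), where Φ(θ) = a_n(θ)/b_m(θ) − (b_n/b_m)'(θ). -/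

import Mathlib

/-- for `R(θ,r) = (aₙ(θ)r + aₘ(θ)r²)/(bₙ(θ) + bₘ(θ)r)` and the auxiliary
function `𝓕(θ,r) = −ln|bₘ(θ)| + ln|bₙ(θ) + bₘ(θ)r| − 2 ln|r| − ln 2π`, at every point with
`r ≠ 0`, `bₘ(θ) ≠ 0` and `bₙ(θ) + bₘ(θ)r ≠ 0`,
`∂R/∂r + ∂𝓕/∂θ + ∂𝓕/∂r · R = −bₘ(θ)Φ(θ)/(bₙ(θ) + bₘ(θ)r)`,
where `Φ = aₙ/bₘ − (bₙ/bₘ)'`. -/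
theorem stmt_10 (an am bn bm : ℝ → ℝ)
    (han : Differentiable ℝ an) (ham : Differentiable ℝ am)
    (hbn : Differentiable ℝ bn) (hbm : Differentiable ℝ bm)
    (R F : ℝ → ℝ → ℝ)
    (hR : ∀ θ r : ℝ, R θ r = (an θ * r + am θ * r ^ 2) / (bn θ + bm θ * r))
    (hF : ∀ θ r : ℝ, F θ r
      = -Real.log |bm θ| + Real.log |bn θ + bm θ * r| - 2 * Real.log |r| - Real.log (2 * Real.pi))
    (θ r : ℝ) (hr : r ≠ 0) (hbmθ : bm θ ≠ 0) (hden : bn θ + bm θ * r ≠ 0) :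
    deriv (fun s : ℝ => R θ s) r + deriv (fun u : ℝ => F u r) θ
        + deriv (fun s : ℝ => F θ s) r * R θ r
      = -(bm θ * (an θ / bm θ - deriv (fun u : ℝ => bn u / bm u) θ)) / (bn θ + bm θ * r) := by
  have hRfun : (fun s : ℝ => R θ s) = fun s => (an θ * s + am θ * s ^ 2) / (bn θ + bm θ * s) :=
    funext fun s => hR θ s
  have hFθfun : (fun u : ℝ => F u r)
      = fun u => -Real.log (bm u) + Real.log (bn u + bm u * r)
          - 2 * Real.log |r| - Real.log (2 * Real.pi) := by
    funext u; rw [hF, Real.log_abs, Real.log_abs]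
  have hFrfun : (fun s : ℝ => F θ s)
      = fun s => -Real.log (bm θ) + Real.log (bn θ + bm θ * s)
          - 2 * Real.log s - Real.log (2 * Real.pi) := by
    funext s; rw [hF, Real.log_abs, Real.log_abs, Real.log_abs]
  -- derivative of R in r
  have hnum : HasDerivAt (fun s : ℝ => an θ * s + am θ * s ^ 2)
      (an θ * 1 + am θ * (2 * r ^ 1)) r :=
    ((hasDerivAt_id r).const_mul (an θ)).add ((hasDerivAt_pow 2 r).const_mul (am θ))
  have hdenD : HasDerivAt (fun s : ℝ => bn θ + bm θ * s) (bm θ * 1) r :=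
    ((hasDerivAt_id r).const_mul (bm θ)).const_add (bn θ)
  have hDR : deriv (fun s : ℝ => R θ s) r
      = ((an θ * 1 + am θ * (2 * r ^ 1)) * (bn θ + bm θ * r)
          - (an θ * r + am θ * r ^ 2) * (bm θ * 1)) / (bn θ + bm θ * r) ^ 2 := by
    rw [hRfun]; exact (hnum.div hdenD hden).deriv
  -- derivative of F in θ
  have hbmD : HasDerivAt bm (deriv bm θ) θ := (hbm θ).hasDerivAt
  have hbnD : HasDerivAt bn (deriv bn θ) θ := (hbn θ).hasDerivAt
  have hFθ : deriv (fun u : ℝ => F u r) θ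
      = -(deriv bm θ / bm θ) + (deriv bn θ + deriv bm θ * r) / (bn θ + bm θ * r) := by
    rw [hFθfun]
    exact ((((hbmD.log hbmθ).neg.add
      ((hbnD.add (hbmD.mul_const r)).log hden)).sub_const
        (2 * Real.log |r|)).sub_const (Real.log (2 * Real.pi))).deriv
  -- derivative of F in r
  have hFr : deriv (fun s : ℝ => F θ s) r
      = (bm θ * 1) / (bn θ + bm θ * r) - 2 * r⁻¹ := by
    rw [hFrfun]
    have h1 : HasDerivAt (fun s : ℝ => -Real.log (bm θ) + Real.log (bn θ + bm θ * s))
        ((bm θ * 1) / (bn θ + bm θ * r)) r :=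
      ((((hasDerivAt_id r).const_mul (bm θ)).const_add (bn θ)).log hden).const_add
        (-Real.log (bm θ))
    have h2 : HasDerivAt Real.log r⁻¹ r := Real.hasDerivAt_log hr
    exact ((h1.sub (h2.const_mul 2)).sub_const (Real.log (2 * Real.pi))).deriv
  -- derivative of bn/bm
  have hQ : deriv (fun u : ℝ => bn u / bm u) θ
      = (deriv bn θ * bm θ - bn θ * deriv bm θ) / bm θ ^ 2 := (hbnD.div hbmD hbmθ).deriv
  rw [hDR, hFθ, hFr, hQ, hR]
  have hden' : bn θ + r * bm θ ≠ 0 := by rwa [mul_comm]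
  field_simp
  ring
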